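/- For any x ∈ [-1/2, 1/2] and any positive integer n, the sum of squares of the first n Chebyshev polynomials of the first kind satisfies n/2 - √3/3 ≤ Σ_{j=0}^{n-1} T_j(x)² ≤ n/2 + √3/3. -/

import Mathlib

lemma cheb_teles (θ : ℝ) (n : ℕ) :
    ∑ j ∈ Finset.range n, 2 * Real.cos (2 * j * θ) * Real.sin θ
      = Real.sin ((2 * n - 1) * θ) + Real.sin θ := by
  induction n with
  | zero =>
      simp only [Finset.sum_range_zero, Nat.cast_zero]
      rw [show ((2:ℝ) * 0 - 1) * θ = -θ by ring, Real.sin_neg]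
      ring
  | succ n ih =>
      rw [Finset.sum_range_succ, ih,
        show ((2:ℝ) * (n + 1 : ℕ) - 1) * θ = 2 * n * θ + θ by push_cast; ring,
        show ((2:ℝ) * n - 1) * θ = 2 * n * θ - θ by ring,
        Real.sin_add, Real.sin_sub]
      push_cast
      ring

open Polynomial Chebyshev in
/-- ℓ₂-norm bounds for Chebyshev polynomials of the first kind on `[-1/2, 1/2]`. -/
theorem chebyshev_sum_sq_bounds (n : ℕ) (hn : 0 < n) (x : ℝ)
    (hx : x ∈ Set.Icc (-(1 / 2) : ℝ) (1 / 2)) :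
    (n : ℝ) / 2 - Real.sqrt 3 / 3 ≤
      ∑ j ∈ Finset.range n, ((Polynomial.Chebyshev.T ℝ (j : ℤ)).eval x) ^ 2 ∧
    ∑ j ∈ Finset.range n, ((Polynomial.Chebyshev.T ℝ (j : ℤ)).eval x) ^ 2 ≤
      (n : ℝ) / 2 + Real.sqrt 3 / 3 := by
  obtain ⟨hx1, hx2⟩ := hx
  have hx1' : (-1 : ℝ) ≤ x := by linarith
  have hx2' : x ≤ 1 := by linarith
  set θ' := Real.arccos x with hθ
  have hcos : Real.cos θ' = x := Real.cos_arccos hx1' hx2'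
  have heval : ∀ j : ℕ, ((Polynomial.Chebyshev.T ℝ (j : ℤ)).eval x) ^ 2
      = 1 / 2 + Real.cos (2 * j * θ') / 2 := by
    intro j
    rw [← hcos, Polynomial.Chebyshev.T_real_cos, Real.cos_sq]
    push_cast
    ring_nf
  have hsum : ∑ j ∈ Finset.range n, ((Polynomial.Chebyshev.T ℝ (j : ℤ)).eval x) ^ 2
      = n / 2 + (∑ j ∈ Finset.range n, Real.cos (2 * j * θ')) / 2 := by
    simp only [heval, Finset.sum_add_distrib, Finset.sum_const, Finset.card_range,
      nsmul_eq_mul, ← Finset.sum_div]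
    ring
  set A := ∑ j ∈ Finset.range n, Real.cos (2 * j * θ') with hA
  set s := Real.sin θ' with hs
  set σ := Real.sin ((2 * n - 1) * θ') with hσdef
  -- telescoping identity
  have htel : 2 * A * s = σ + s := by
    have h := cheb_teles θ' n
    rw [← hs, ← hσdef] at h
    rw [← h, hA, Finset.mul_sum, Finset.sum_mul]
  have hrt : (Real.sqrt 3) ^ 2 = 3 := Real.sq_sqrt (by norm_num)
  have hrt0 : 0 ≤ Real.sqrt 3 := Real.sqrt_nonneg 3
  have hrt1 : (1:ℝ) ≤ Real.sqrt 3 := by nlinarith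
  have hrt2 : Real.sqrt 3 ≤ 2 := by nlinarith
  -- lower bound for sin θ'
  have hsin : s = Real.sqrt (1 - x ^ 2) := by rw [hs, hθ]; exact Real.sin_arccos x
  have hs0 : 0 ≤ Real.sqrt (1 - x ^ 2) := Real.sqrt_nonneg _
  have hssq : Real.sqrt (1 - x ^ 2) ^ 2 = 1 - x ^ 2 :=
    Real.sq_sqrt (by nlinarith)
  have hs3 : Real.sqrt 3 / 2 ≤ s := by
    rw [hsin]
    nlinarith [hssq, hs0]
  have hspos : 0 < s := by linarith
  have hσ1 : -1 ≤ σ := Real.neg_one_le_sin _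
  have hσ2 : σ ≤ 1 := Real.sin_le_one _
  have key : 0 ≤ (4 * Real.sqrt 3 - 3) * (s - Real.sqrt 3 / 2) :=
    mul_nonneg (by linarith) (by linarith)
  have hAub : A ≤ 2 * Real.sqrt 3 / 3 := by nlinarith [htel, hspos, key]
  have hAlb : -(2 * Real.sqrt 3 / 3) ≤ A := by
    have key2 : 0 ≤ (3 + 4 * Real.sqrt 3) * (s - Real.sqrt 3 / 2) :=
      mul_nonneg (by linarith) (by linarith)
    nlinarith [htel, hspos, key2]
  constructor
  · rw [hsum]; linarith
  · rw [hsum]; linarith
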